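/- For all n ≥ 1 and 0 ≤ k ≤ n, the hypergeometric-type identity ∑_{j=0}^k [C(2j,j) C(n,2j) (2j)!! / ∏_{i=0}^{j-1}(m+2i+1)] · C(n-2j, k-j) / C(n,k) = ∏_{j=0}^{k-1}(2n+m-1-2j) / ∏_{j=0}^{k-1}(2k+m-1-2j) holds for every positive integer m. -/

import Mathlib

open Finset

/-- Cast of descFactorial as a product over ℚ. -/
lemma castdf (N : ℕ) : ∀ j : ℕ, (N.descFactorial j : ℚ) = ∏ i ∈ range j, ((N : ℚ) - i) := by
  intro j
  induction j with
  | zero => simp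
  | succ j ih =>
    rw [prod_range_succ, ← ih, Nat.descFactorial_succ]
    by_cases h : j ≤ N
    · push_cast [Nat.cast_sub h]
      ring
    · rw [Nat.descFactorial_eq_zero_iff_lt.mpr (show N < j by omega)]
      push_cast
      ring

/-- Vandermonde identity for step-2 falling factorials over ℚ. -/
lemma vand2 (x y : ℚ) : ∀ k : ℕ,
    ∑ j ∈ range (k + 1), (k.choose j : ℚ) * (∏ i ∈ range j, (x - 2 * i)) *
      (∏ i ∈ range (k - j), (y - 2 * i)) = ∏ i ∈ range k, (x + y - 2 * i) := by
  intro k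
  induction k with
  | zero => simp
  | succ k ih =>
    have key : ∀ j ∈ range (k + 1),
        (k.choose j : ℚ) * (∏ i ∈ range j, (x - 2 * i)) *
          (∏ i ∈ range (k - j), (y - 2 * i)) * (x + y - 2 * k)
        = (k.choose j : ℚ) * (∏ i ∈ range (j + 1), (x - 2 * i)) *
            (∏ i ∈ range (k - j), (y - 2 * i))
          + (k.choose j : ℚ) * (∏ i ∈ range j, (x - 2 * i)) *
            (∏ i ∈ range (k - j + 1), (y - 2 * i)) := by
      intro j hj
      rw [mem_range] at hj
      rw [prod_range_succ, prod_range_succ]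
      have hkj : ((k - j : ℕ) : ℚ) = (k : ℚ) - j := by
        push_cast [Nat.cast_sub (by omega : j ≤ k)]; ring
      rw [hkj]
      ring
    have step : (∏ i ∈ range k, (x + y - 2 * i)) * (x + y - 2 * k)
        = (∑ j ∈ range (k + 1), (k.choose j : ℚ) * (∏ i ∈ range (j + 1), (x - 2 * i)) *
            (∏ i ∈ range (k - j), (y - 2 * i)))
          + ∑ j ∈ range (k + 1), (k.choose j : ℚ) * (∏ i ∈ range j, (x - 2 * i)) *
            (∏ i ∈ range (k - j + 1), (y - 2 * i)) := by
      rw [← ih, ← sum_add_distrib, Finset.sum_mul]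
      exact Finset.sum_congr rfl key
    rw [prod_range_succ, step]
    -- LHS: peel off the j = 0 term
    rw [Finset.sum_range_succ']
    simp only [Nat.choose_succ_succ, Nat.cast_add, Nat.choose_zero_right, Nat.cast_one,
      prod_range_zero, mul_one, one_mul, Nat.sub_zero, Nat.succ_sub_succ]
    have split : ∑ j ∈ range (k + 1), ((k.choose j : ℚ) + (k.choose (j + 1) : ℚ)) *
        (∏ i ∈ range (j + 1), (x - 2 * i)) * (∏ i ∈ range (k - j), (y - 2 * i))
        = (∑ j ∈ range (k + 1), (k.choose j : ℚ) * (∏ i ∈ range (j + 1), (x - 2 * i)) *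
            (∏ i ∈ range (k - j), (y - 2 * i)))
          + ∑ j ∈ range (k + 1), (k.choose (j + 1) : ℚ) *
            (∏ i ∈ range (j + 1), (x - 2 * i)) * (∏ i ∈ range (k - j), (y - 2 * i)) := by
      rw [← sum_add_distrib]
      exact Finset.sum_congr rfl fun j _ => by ring
    rw [split, add_assoc]
    congr 1
    -- remaining : ∑ C(k,j+1) A(j+1) B(k-j) + B(k+1) = ∑ C(k,j) A j B(k-j+1)
    have hS2 : ∑ j ∈ range (k + 1), (k.choose j : ℚ) * (∏ i ∈ range j, (x - 2 * i)) *
        (∏ i ∈ range (k - j + 1), (y - 2 * i))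
        = ∑ j ∈ range (k + 1), (k.choose j : ℚ) * (∏ i ∈ range j, (x - 2 * i)) *
          (∏ i ∈ range (k + 1 - j), (y - 2 * i)) := by
      refine Finset.sum_congr rfl fun j hj => ?_
      rw [mem_range] at hj
      rw [show k - j + 1 = k + 1 - j by omega]
    rw [hS2, Finset.sum_range_succ' (fun j => (k.choose j : ℚ) *
      (∏ i ∈ range j, (x - 2 * i)) * (∏ i ∈ range (k + 1 - j), (y - 2 * i)))]
    simp only [Nat.choose_zero_right, Nat.cast_one, prod_range_zero, mul_one, one_mul,
      Nat.sub_zero, Nat.succ_sub_succ]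
    congr 1
    rw [Finset.sum_range_succ]
    simp [Nat.choose_succ_self]

theorem gauss_hypergeometric_identity (m n k : ℕ) (hm : 1 ≤ m) (hn : 1 ≤ n)
    (hk : k ≤ n) :
    ∑ j ∈ range (k + 1),
        (((2 * j).choose j * n.choose (2 * j) : ℚ) * (2 ^ j * j.factorial) /
            ∏ i ∈ range j, ((m : ℚ) + 2 * i + 1)) *
          ((n - 2 * j).choose (k - j) : ℚ) / (n.choose k : ℚ) =
      (∏ j ∈ range k, (2 * (n : ℚ) + m - 1 - 2 * j)) /
        ∏ j ∈ range k, (2 * (k : ℚ) + m - 1 - 2 * j) := by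
  have hnk : (n.choose k : ℚ) ≠ 0 := Nat.cast_ne_zero.mpr (Nat.choose_pos hk).ne'
  have hP : ∀ j : ℕ, (0 : ℚ) < ∏ i ∈ range j, ((m : ℚ) + 2 * i + 1) :=
    fun j => Finset.prod_pos fun i _ => by positivity
  -- the key cast identity for each term (numerator algebra)
  have hB : ∀ j ≤ k, ((2 * j).choose j : ℚ) * (n.choose (2 * j)) * j.factorial *
      ((n - 2 * j).choose (k - j)) = (k.choose j : ℚ) * ((n - k).descFactorial j) *
      (n.choose k) := by
    intro j hj
    by_cases hdeg : n < j + k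
    · have hdf : (n - k).descFactorial j = 0 :=
        Nat.descFactorial_eq_zero_iff_lt.mpr (by omega)
      rw [hdf]
      by_cases h2j : n < 2 * j
      · rw [Nat.choose_eq_zero_of_lt h2j]; push_cast; ring
      · rw [Nat.choose_eq_zero_of_lt (show n - 2 * j < k - j by omega)]; push_cast; ring
    · push_neg at hdeg
      have h1 : j ≤ 2 * j := by omega
      have h2 : 2 * j ≤ n := by omega
      have h3 : k - j ≤ n - 2 * j := by omega
      rw [Nat.cast_choose ℚ h1, Nat.cast_choose ℚ h2, Nat.cast_choose ℚ h3,
        Nat.cast_choose ℚ hk, Nat.cast_choose ℚ hj,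
        Nat.descFactorial_eq_factorial_mul_choose,
        show 2 * j - j = j by omega, show n - 2 * j - (k - j) = n - (j + k) by omega]
      push_cast
      rw [Nat.cast_choose ℚ (show j ≤ n - k by omega),
        show n - k - j = n - (j + k) by omega]
      have f1 : ((j.factorial : ℚ)) ≠ 0 := Nat.cast_ne_zero.mpr j.factorial_ne_zero
      have f2 : (((2 * j).factorial : ℚ)) ≠ 0 := Nat.cast_ne_zero.mpr (2 * j).factorial_ne_zero
      have f3 : (((n - 2 * j).factorial : ℚ)) ≠ 0 :=
        Nat.cast_ne_zero.mpr (n - 2 * j).factorial_ne_zero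
      have f4 : (((k - j).factorial : ℚ)) ≠ 0 := Nat.cast_ne_zero.mpr (k - j).factorial_ne_zero
      have f5 : (((n - (j + k)).factorial : ℚ)) ≠ 0 :=
        Nat.cast_ne_zero.mpr (n - (j + k)).factorial_ne_zero
      have f6 : ((k.factorial : ℚ)) ≠ 0 := Nat.cast_ne_zero.mpr k.factorial_ne_zero
      have f7 : (((n - k).factorial : ℚ)) ≠ 0 := Nat.cast_ne_zero.mpr (n - k).factorial_ne_zero
      have f8 : ((n.factorial : ℚ)) ≠ 0 := Nat.cast_ne_zero.mpr n.factorial_ne_zero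
      field_simp
  -- per-term rewrite
  have hterm : ∀ j ∈ range (k + 1),
      (((2 * j).choose j * n.choose (2 * j) : ℚ) * (2 ^ j * j.factorial) /
          ∏ i ∈ range j, ((m : ℚ) + 2 * i + 1)) *
        ((n - 2 * j).choose (k - j) : ℚ) / (n.choose k : ℚ)
      = (k.choose j : ℚ) * (∏ i ∈ range j, (2 * ((n : ℚ) - k) - 2 * i)) *
          (∏ i ∈ range (k - j), (((m : ℚ) + 2 * k - 1) - 2 * i)) /
          ∏ i ∈ range k, ((m : ℚ) + 2 * i + 1) := by
    intro j hj
    rw [mem_range] at hj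
    have hj' : j ≤ k := by omega
    -- step 1 : value in terms of descFactorial
    have hA : (∏ i ∈ range j, (2 * ((n : ℚ) - k) - 2 * i))
        = 2 ^ j * ((n - k).descFactorial j : ℚ) := by
      rw [castdf, show (2 : ℚ) ^ j = ∏ _i ∈ range j, (2 : ℚ) by simp,
        ← Finset.prod_mul_distrib]
      refine Finset.prod_congr rfl fun i _ => ?_
      rw [Nat.cast_sub hk]
      ring
    have hPk : (∏ i ∈ range k, ((m : ℚ) + 2 * i + 1))
        = (∏ i ∈ range j, ((m : ℚ) + 2 * i + 1)) *
          ∏ i ∈ range (k - j), (((m : ℚ) + 2 * k - 1) - 2 * i) := by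
      rw [← Finset.prod_range_mul_prod_Ico _ hj']
      congr 1
      rw [Finset.prod_Ico_eq_prod_range, ← Finset.prod_range_reflect]
      refine Finset.prod_congr rfl fun i hi => ?_
      rw [mem_range] at hi
      rw [show j + (k - j - 1 - i) = k - (i + 1) by omega,
        Nat.cast_sub (show i + 1 ≤ k by omega)]
      push_cast
      ring
    have hBne : (∏ i ∈ range (k - j), (((m : ℚ) + 2 * k - 1) - 2 * i)) ≠ 0 := by
      refine (Finset.prod_pos fun i hi => ?_).ne'
      rw [mem_range] at hi
      have h1 : (i : ℚ) ≤ (k : ℚ) - 1 := by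
        have : (i : ℚ) + 1 ≤ (k : ℚ) := by exact_mod_cast show i + 1 ≤ k by omega
        linarith
      have h2 : (1 : ℚ) ≤ (m : ℚ) := by exact_mod_cast hm
      linarith
    rw [hA, hPk, mul_div_mul_right _ _ hBne, div_mul_eq_mul_div, div_div,
      div_eq_div_iff (by positivity) (hP j).ne']
    linear_combination ((2 : ℚ) ^ j * ∏ i ∈ range j, ((m : ℚ) + 2 * i + 1)) * hB j hj' 
  rw [Finset.sum_congr rfl hterm, ← Finset.sum_div, vand2 (2 * ((n : ℚ) - k)) ((m : ℚ) + 2 * k - 1) k]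
  congr 1
  · exact Finset.prod_congr rfl fun i _ => by ring
  · rw [← Finset.prod_range_reflect]
    refine Finset.prod_congr rfl fun i hi => ?_
    rw [mem_range] at hi
    rw [show k - 1 - i = k - (i + 1) by omega, Nat.cast_sub (show i + 1 ≤ k by omega)]
    push_cast
    ring
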